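/- Let q > 1 be a real number and let h, N be integers with 0 ≤ h ≤ N. Then ∑_{s=0}^{h} (-1)^s (-q)^{s(1-s)/2} · ∏_{l=1}^{N-s}(1 - (-q)^{-l}) / [ ∏_{l=1}^{s}(1 - (-q)^{-l}) · ∏_{l=1}^{h-s}(1 - (-q)^{-l}) ] = (-1)^h (-q)^{-hN + h(h-1)/2} · ∏_{l=1}^{N-h}(1 - (-q)^{-l}) / ∏_{l=1}^{h}(1 - (-q)^{-l}). -/

import Mathlib

open Finset

noncomputable def Pfn (x : ℝ) (n : ℕ) : ℝ := ∏ l ∈ Finset.Icc 1 n, (1 - x ^ l)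

noncomputable def Bfn (x : ℝ) (h s : ℕ) : ℝ :=
  if s ≤ h then Pfn x h / (Pfn x s * Pfn x (h - s)) else 0

lemma Pfn_zero (x : ℝ) : Pfn x 0 = 1 := by simp [Pfn]

lemma Pfn_succ (x : ℝ) (n : ℕ) : Pfn x (n + 1) = Pfn x n * (1 - x ^ (n + 1)) := by
  rw [Pfn, Pfn, Finset.prod_Icc_succ_top (by omega)]

lemma Pfn_ne (x : ℝ) (hx : ∀ l : ℕ, 1 ≤ l → (1 : ℝ) - x ^ l ≠ 0) (n : ℕ) : Pfn x n ≠ 0 := by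
  apply Finset.prod_ne_zero_iff.2
  intro l hl
  exact hx l (Finset.mem_Icc.1 hl).1

lemma Bfn_zero (x : ℝ) (hx : ∀ l : ℕ, 1 ≤ l → (1 : ℝ) - x ^ l ≠ 0) (h : ℕ) :
    Bfn x h 0 = 1 := by
  rw [Bfn, if_pos (Nat.zero_le h), Pfn_zero, Nat.sub_zero, one_mul,
    div_self (Pfn_ne x hx h)]

lemma two_mul_choose (n : ℕ) : 2 * n.choose 2 = n * (n - 1) := by
  induction n with
  | zero => rfl
  | succ k ih =>
    rw [Nat.choose_succ_succ, Nat.choose_one_right, Nat.mul_add, ih, Nat.add_sub_cancel]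
    cases k with
    | zero => rfl
    | succ m => simp only [Nat.add_sub_cancel]; ring

lemma choose_two_succ (h : ℕ) : (h + 1).choose 2 = h.choose 2 + h := by
  have key : 2 * (h + 1).choose 2 = 2 * (h.choose 2 + h) := by
    have a := two_mul_choose (h + 1)
    simp only [Nat.add_sub_cancel] at a
    calc 2 * (h + 1).choose 2 = (h + 1) * h := a
      _ = h * (h - 1) + 2 * h := by
          cases h with
          | zero => rfl
          | succ m => simp only [Nat.add_sub_cancel]; ring
      _ = 2 * h.choose 2 + 2 * h := by rw [two_mul_choose]
      _ = 2 * (h.choose 2 + h) := by ring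
  omega

lemma choose_two_le (h M : ℕ) (hM : h ≤ M) : h.choose 2 ≤ h * M := by
  have key : 2 * h.choose 2 ≤ 2 * (h * M) := by
    rw [two_mul_choose]
    calc h * (h - 1) ≤ h * (2 * M) := Nat.mul_le_mul_left h (by omega)
      _ = 2 * (h * M) := by ring
  exact Nat.le_of_mul_le_mul_left key (by norm_num)

lemma Bfn_pascal (x : ℝ) (hx : ∀ l : ℕ, 1 ≤ l → (1 : ℝ) - x ^ l ≠ 0) (h s : ℕ) :
    Bfn x (h + 1) (s + 1) = Bfn x h s + x ^ (s + 1) * Bfn x h (s + 1) := by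
  rcases lt_trichotomy s h with hsh | rfl | hsh
  · obtain ⟨m, rfl⟩ : ∃ m, h = s + 1 + m := ⟨h - (s + 1), by omega⟩
    rw [Bfn, Bfn, Bfn, if_pos (by omega : s + 1 ≤ s + 1 + m + 1),
      if_pos (by omega : s ≤ s + 1 + m), if_pos (by omega : s + 1 ≤ s + 1 + m)]
    have e1 : s + 1 + m + 1 - (s + 1) = m + 1 := by omega
    have e2 : s + 1 + m - s = m + 1 := by omega
    have e3 : s + 1 + m - (s + 1) = m := by omega
    rw [e1, e2, e3, Pfn_succ x (s + 1 + m), Pfn_succ x m, Pfn_succ x s]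
    have hPs := Pfn_ne x hx s
    have hPm := Pfn_ne x hx m
    have hPh := Pfn_ne x hx (s + 1 + m)
    have hxs := hx (s + 1) (by omega)
    have hxm := hx (m + 1) (by omega)
    field_simp
    ring
  · rw [Bfn, Bfn, Bfn, if_pos le_rfl, if_pos le_rfl, if_neg (by omega)]
    rw [Nat.sub_self, Nat.sub_self, Pfn_zero, mul_one, mul_one,
      div_self (Pfn_ne x hx (s + 1)), div_self (Pfn_ne x hx s), mul_zero, add_zero]
  · rw [Bfn, Bfn, Bfn, if_neg (by omega), if_neg (by omega), if_neg (by omega)]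
    simp

lemma keyB (x : ℝ) (hx : ∀ l : ℕ, 1 ≤ l → (1 : ℝ) - x ^ l ≠ 0) :
    ∀ h N : ℕ, h ≤ N →
      ∑ s ∈ Finset.range (h + 1),
          (-1 : ℝ) ^ s * x ^ (s.choose 2) * Bfn x h s * Pfn x (N - s)
        = (-1 : ℝ) ^ h * x ^ (h * N - h.choose 2) * Pfn x (N - h) := by
  intro h
  induction h with
  | zero =>
    intro N _
    simp [Bfn_zero x hx]
  | succ h ih =>
    intro N hN
    obtain ⟨M, rfl⟩ : ∃ M, N = M + 1 := ⟨N - 1, by omega⟩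
    have hhM : h ≤ M := by omega
    set V : ℕ → ℝ := fun s =>
      (-1 : ℝ) ^ s * x ^ (s.choose 2 + s) * Bfn x h s * Pfn x (M + 1 - s) with hV
    set U : ℕ → ℝ := fun s =>
      (-1 : ℝ) ^ s * x ^ (s.choose 2 + s) * Bfn x h s * Pfn x (M - s) with hU
    have key1 : ∀ s ∈ Finset.range (h + 1),
        (-1 : ℝ) ^ (s + 1) * x ^ ((s + 1).choose 2) * Bfn x (h + 1) (s + 1) *
            Pfn x (M + 1 - (s + 1))
          = V (s + 1) - U s := by
      intro s _
      rw [Bfn_pascal x hx h s]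
      have e1 : M + 1 - (s + 1) = M - s := by omega
      simp only [hV, hU, e1, choose_two_succ]
      ring
    calc
      ∑ s ∈ Finset.range (h + 1 + 1),
          (-1 : ℝ) ^ s * x ^ (s.choose 2) * Bfn x (h + 1) s * Pfn x (M + 1 - s)
        = (∑ s ∈ Finset.range (h + 1),
            (-1 : ℝ) ^ (s + 1) * x ^ ((s + 1).choose 2) * Bfn x (h + 1) (s + 1) *
              Pfn x (M + 1 - (s + 1)))
          + (-1 : ℝ) ^ 0 * x ^ ((0 : ℕ).choose 2) * Bfn x (h + 1) 0 * Pfn x (M + 1 - 0) :=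
          Finset.sum_range_succ' _ (h + 1)
      _ = (∑ s ∈ Finset.range (h + 1), (V (s + 1) - U s)) + Pfn x (M + 1) := by
          rw [Finset.sum_congr rfl key1]
          simp [Bfn_zero x hx]
      _ = ((∑ s ∈ Finset.range (h + 1), V (s + 1)) - ∑ s ∈ Finset.range (h + 1), U s)
            + Pfn x (M + 1) := by rw [Finset.sum_sub_distrib]
      _ = (∑ s ∈ Finset.range (h + 1), V s) - ∑ s ∈ Finset.range (h + 1), U s := by
          have h2 : ∑ s ∈ Finset.range (h + 1 + 1), V s
              = (∑ s ∈ Finset.range (h + 1), V (s + 1)) + V 0 :=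
            Finset.sum_range_succ' V (h + 1)
          have h3 : ∑ s ∈ Finset.range (h + 1 + 1), V s
              = (∑ s ∈ Finset.range (h + 1), V s) + V (h + 1) :=
            Finset.sum_range_succ V (h + 1)
          have h4 : V (h + 1) = 0 := by
            simp [hV, Bfn, Nat.not_succ_le_self]
          have h5 : V 0 = Pfn x (M + 1) := by
            simp [hV, Bfn_zero x hx]
          rw [h4, add_zero] at h3
          rw [h5] at h2
          linarith [h2, h3]
      _ = ∑ s ∈ Finset.range (h + 1), (V s - U s) := (Finset.sum_sub_distrib _ _).symm
      _ = ∑ s ∈ Finset.range (h + 1),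
            (-(x ^ (M + 1))
              * ((-1 : ℝ) ^ s * x ^ (s.choose 2) * Bfn x h s * Pfn x (M - s))) := by
          apply Finset.sum_congr rfl
          intro s hs
          have hsM : s ≤ M := le_trans (Nat.lt_succ_iff.mp (Finset.mem_range.mp hs)) hhM
          have e1 : M + 1 - s = (M - s) + 1 := by omega
          have e2 : x ^ s * x ^ (M - s + 1) = x ^ (M + 1) := by
            rw [← pow_add]; congr 1; omega
          simp only [hV, hU, e1, Pfn_succ]
          linear_combination
            (-(-1 : ℝ) ^ s * x ^ (s.choose 2) * Bfn x h s * Pfn x (M - s)) * e2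
      _ = -(x ^ (M + 1)) *
            ∑ s ∈ Finset.range (h + 1),
              (-1 : ℝ) ^ s * x ^ (s.choose 2) * Bfn x h s * Pfn x (M - s) := by
          rw [← Finset.mul_sum]
      _ = -(x ^ (M + 1)) * ((-1 : ℝ) ^ h * x ^ (h * M - h.choose 2) * Pfn x (M - h)) := by
          rw [ih M hhM]
      _ = (-1 : ℝ) ^ (h + 1) * x ^ ((h + 1) * (M + 1) - (h + 1).choose 2) *
            Pfn x (M + 1 - (h + 1)) := by
          have e1 : M + 1 - (h + 1) = M - h := by omega
          have e2 : (h + 1) * (M + 1) - (h + 1).choose 2 = (M + 1) + (h * M - h.choose 2) := by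
            have h1 : (h + 1) * (M + 1) = h * M + h + M + 1 := by ring
            have h2 : h.choose 2 ≤ h * M := choose_two_le h M hhM
            rw [h1, choose_two_succ]
            generalize h * M = a at h2 ⊢
            generalize h.choose 2 = c at h2 ⊢
            omega
          rw [e1, e2, pow_add]
          ring

theorem stmt_4 (q : ℝ) (hq : 1 < q) (h N : ℕ) (hN : h ≤ N) :
    ∑ s ∈ Finset.range (h + 1),
      (-1 : ℝ) ^ s * (-q) ^ (((s : ℤ) * (1 - (s : ℤ))) / 2) *
        (∏ l ∈ Finset.Icc 1 (N - s), (1 - (-q) ^ (-(l : ℤ)))) /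
        ((∏ l ∈ Finset.Icc 1 s, (1 - (-q) ^ (-(l : ℤ)))) *
          (∏ l ∈ Finset.Icc 1 (h - s), (1 - (-q) ^ (-(l : ℤ)))))
    = (-1 : ℝ) ^ h * (-q) ^ (-((h : ℤ) * (N : ℤ)) + ((h : ℤ) * ((h : ℤ) - 1)) / 2) *
        (∏ l ∈ Finset.Icc 1 (N - h), (1 - (-q) ^ (-(l : ℤ)))) /
        (∏ l ∈ Finset.Icc 1 h, (1 - (-q) ^ (-(l : ℤ)))) := by
  set x : ℝ := (-q)⁻¹ with hxdef
  have hxabs : |x| < 1 := by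
    rw [hxdef, abs_inv, abs_neg, abs_of_pos (by linarith)]
    rw [inv_lt_one_iff₀]
    right; exact hq
  have hx : ∀ l : ℕ, 1 ≤ l → (1 : ℝ) - x ^ l ≠ 0 := by
    intro l hl h0
    have h1 : x ^ l = 1 := by linarith [sub_eq_zero.mp h0]
    have h2 : |x ^ l| < 1 := by
      rw [abs_pow]
      calc |x| ^ l ≤ |x| ^ 1 := pow_le_pow_of_le_one (abs_nonneg x) hxabs.le hl
        _ = |x| := pow_one _
        _ < 1 := hxabs
    rw [h1] at h2
    norm_num at h2
  have hZ : ∀ s : ℕ, (2 * (s.choose 2 : ℤ)) = (s : ℤ) * ((s : ℤ) - 1) := by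
    intro s
    cases s with
    | zero => simp
    | succ k =>
      have h1 : 2 * (k + 1).choose 2 = (k + 1) * ((k + 1) - 1) := two_mul_choose (k + 1)
      simp only [Nat.add_sub_cancel] at h1
      have h2 := congrArg (fun n : ℕ => (n : ℤ)) h1
      push_cast at h2 ⊢
      linear_combination h2
  have hprod : ∀ n : ℕ,
      (∏ l ∈ Finset.Icc 1 n, (1 - (-q) ^ (-(l : ℤ)))) = Pfn x n := by
    intro n
    apply Finset.prod_congr rfl
    intro l _
    rw [zpow_neg, zpow_natCast, hxdef, inv_pow]
  have hpow1 : ∀ s : ℕ, (-q) ^ (((s : ℤ) * (1 - (s : ℤ))) / 2) = x ^ (s.choose 2) := by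
    intro s
    have h2 : (s : ℤ) * (1 - (s : ℤ)) = -(2 * (s.choose 2 : ℤ)) := by
      linear_combination hZ s
    have he : ((s : ℤ) * (1 - (s : ℤ))) / 2 = -((s.choose 2 : ℤ)) := by
      rw [h2]; omega
    rw [he, zpow_neg, zpow_natCast, hxdef, inv_pow]
  have hE : (-q) ^ (-((h : ℤ) * (N : ℤ)) + ((h : ℤ) * ((h : ℤ) - 1)) / 2)
      = x ^ (h * N - h.choose 2) := by
    have h1 : ((h : ℤ) * ((h : ℤ) - 1)) / 2 = (h.choose 2 : ℤ) := by
      rw [← hZ h]; omega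
    have h3 : h.choose 2 ≤ h * N := choose_two_le h N hN
    have h4 : -((h : ℤ) * (N : ℤ)) + ((h : ℤ) * ((h : ℤ) - 1)) / 2
        = -(((h * N - h.choose 2 : ℕ) : ℤ)) := by
      rw [h1, Nat.cast_sub h3]
      push_cast
      ring
    rw [h4, zpow_neg, zpow_natCast, hxdef, inv_pow]
  have hPh := Pfn_ne x hx h
  calc
    ∑ s ∈ Finset.range (h + 1),
        (-1 : ℝ) ^ s * (-q) ^ (((s : ℤ) * (1 - (s : ℤ))) / 2) *
          (∏ l ∈ Finset.Icc 1 (N - s), (1 - (-q) ^ (-(l : ℤ)))) /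
          ((∏ l ∈ Finset.Icc 1 s, (1 - (-q) ^ (-(l : ℤ)))) *
            (∏ l ∈ Finset.Icc 1 (h - s), (1 - (-q) ^ (-(l : ℤ)))))
      = ∑ s ∈ Finset.range (h + 1),
          ((-1 : ℝ) ^ s * x ^ (s.choose 2) * Bfn x h s * Pfn x (N - s)) / Pfn x h := by
        apply Finset.sum_congr rfl
        intro s hs
        have hsh : s ≤ h := Nat.lt_succ_iff.mp (Finset.mem_range.mp hs)
        rw [hprod, hprod, hprod, hpow1, Bfn, if_pos hsh]
        have h1 := Pfn_ne x hx s
        have h2 := Pfn_ne x hx (h - s)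
        field_simp
    _ = ((-1 : ℝ) ^ h * x ^ (h * N - h.choose 2) * Pfn x (N - h)) / Pfn x h := by
        rw [← Finset.sum_div, keyB x hx h N hN]
    _ = (-1 : ℝ) ^ h * (-q) ^ (-((h : ℤ) * (N : ℤ)) + ((h : ℤ) * ((h : ℤ) - 1)) / 2) *
          (∏ l ∈ Finset.Icc 1 (N - h), (1 - (-q) ^ (-(l : ℤ)))) /
          (∏ l ∈ Finset.Icc 1 h, (1 - (-q) ^ (-(l : ℤ)))) := by
        rw [hprod, hprod, hE]
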